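/- For the 2-way ε-filter on the grid with moves a=(1,0), b=(0,1), c=(1,1): a word over {a,b,c,x} (where x also denotes the move (1,1) but resets the filter) is accepted by the filter automaton M if and only if between any two consecutive occurrences of x (and before the first and after the last x), the block of letters from {a,b,c} avoids the factors ab, ba, ac, bc; consequently M allows a unique ε-path between any two composition states connected in the grid. -/

import Mathlib

/-- The 4-letter alphabet {a, b, c, x}. -/
inductive Ltr | a | b | c | x
deriving DecidableEq

/-- The forbidden two-letter factors: ab, ba, ac, bc. -/
def forb : List (List Ltr) := [[.a, .b], [.b, .a], [.a, .c], [.b, .c]]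

/-- `w` avoids all of ab, ba, ac, bc as factors. -/
def Avoids (w : List Ltr) : Prop := ∀ f ∈ forb, ¬ f <:+: w

/-- Moves on the 2-dimensional grid: a = (1,0), b = (0,1), c = (1,1), x = (1,1). -/
def mv : Ltr → ℕ × ℕ
  | .a => (1, 0)
  | .b => (0, 1)
  | .c => (1, 1)
  | .x => (1, 1)

/-- Total displacement of a word. -/
def disp (w : List Ltr) : ℕ × ℕ := (w.map mv).sum

/-- `w` is a word over {a,b,c} whose moves go from `(p,q)` to `(r,s)`. -/
def Connects (p q r s : ℕ) (w : List Ltr) : Prop :=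
  Ltr.x ∉ w ∧ p + (disp w).1 = r ∧ q + (disp w).2 = s

/-- The transition function of the 2-way ε-filter M, completed with a dead
state `none`. States 0, 1, 2 are `some 0`, `some 1`, `some 2`. With
a = (ε1:ε1), b = (ε2:ε2), c = (ε2:ε1), x = (x:x):
from 0: x→0, a→1, b→2, c→0; from 1: a→1, x→0; from 2: b→2, x→0. -/
def filtStep (q : Option (Fin 3)) (l : Ltr) : Option (Fin 3) :=
  match q with
  | none => none
  | some q =>
    if q = 0 then
      match l with
      | .a => some 1
      | .b => some 2
      | .c => some 0
      | .x => some 0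
    else if q = 1 then
      match l with
      | .a => some 1
      | .x => some 0
      | _ => none
    else
      match l with
      | .b => some 2
      | .x => some 0
      | _ => none

/-- The 2-way ε-filter automaton M: initial state 0, all (non-dead) states
final. -/
def filtM : DFA Ltr (Option (Fin 3)) :=
  ⟨filtStep, some 0, {q | q ≠ none}⟩
def ok (p q : Ltr) : Prop := [p, q] ∉ forb

instance : DecidableRel ok := fun p q => inferInstanceAs (Decidable ([p,q] ∉ forb))

lemma ok_x_left (q : Ltr) : ok Ltr.x q := by cases q <;> decide
lemma ok_x_right (p : Ltr) : ok p Ltr.x := by cases p <;> decide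

lemma avoids_nil : Avoids [] := by
  intro f hf hinf
  have := List.eq_nil_of_infix_nil hinf
  subst this
  simp [forb] at hf

lemma avoids_cons {l : Ltr} {t : List Ltr} :
    Avoids (l :: t) ↔ (∀ h ∈ t.head?, ok l h) ∧ Avoids t := by
  constructor
  · intro H
    refine ⟨?_, ?_⟩
    · intro h hh hmem
      cases t with
      | nil => simp at hh
      | cons h' t' =>
        simp at hh; subst hh
        exact H _ hmem ⟨[], t', rfl⟩
    · intro f hf hinf
      exact H f hf (hinf.trans (List.infix_cons (List.infix_refl t)))
  · rintro ⟨h1, h2⟩ f hf hinf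
    rcases List.infix_cons_iff.1 hinf with hpre | hinf'
    · fin_cases hf <;>
      · rcases hpre with ⟨r, hr⟩
        simp only [List.cons_append, List.nil_append, List.cons.injEq] at hr
        obtain ⟨rfl, rfl⟩ := hr
        exact absurd (h1 _ rfl) (by decide)
    · exact h2 f hf hinf'

lemma avoids_iff (w : List Ltr) : Avoids w ↔ w.IsChain ok := by
  induction w with
  | nil => simpa using avoids_nil
  | cons l t ih => rw [avoids_cons, List.isChain_cons, ih, and_comm]

def st : Option Ltr → Option (Fin 3)
  | some .a => some 1
  | some .b => some 2
  | _ => some 0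

lemma eval_eq (w : List Ltr) :
    filtM.eval w = if w.IsChain ok then st w.getLast? else none := by
  induction w using List.reverseRecOn with
  | nil => simp [filtM, DFA.eval_nil, st]
  | append_singleton w l ih =>
    rw [DFA.eval_append_singleton, ih]
    by_cases hc : w.IsChain ok
    · rw [if_pos hc]
      have hch : (w ++ [l]).IsChain ok ↔ ∀ p ∈ w.getLast?, ok p l := by
        rw [List.isChain_append]
        simp [hc]
      rw [List.getLast?_concat]
      rcases hw : w.getLast? with _ | p
      · simp only [hw] at hch
        simp only [hch.symm, if_pos (hch.mpr (by simp))]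
        cases l <;> rfl
      · simp only [hw, Option.mem_def, Option.some.injEq, forall_eq'] at hch
        by_cases hok : ok p l
        · rw [if_pos (hch.mpr hok)]
          cases p <;> cases l <;> first | rfl | exact absurd hok (by decide)
        · rw [if_neg (fun h => hok (hch.mp h))]
          cases p <;> cases l <;> first | rfl | exact absurd (by decide : ok _ _) hok
    · rw [if_neg hc, if_neg (fun h => hc (h.prefix (List.prefix_append w [l])))]
      rfl

lemma splitOn_aux (t : List Ltr) : ∃ B Bs, t.splitOn Ltr.x = B :: Bs ∧
    (t.IsChain ok ↔ B.IsChain ok ∧ ∀ b ∈ Bs, b.IsChain ok) ∧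
    (∀ p : Ltr, (∀ h ∈ t.head?, ok p h) ↔ (∀ h ∈ B.head?, ok p h)) := by
  induction t with
  | nil => exact ⟨[], [], by simp [List.splitOn], by simp, by simp⟩
  | cons m t ih =>
    obtain ⟨B, Bs, hsp, hch, hhd⟩ := ih
    by_cases hm : m = Ltr.x
    · subst hm
      refine ⟨[], B :: Bs, ?_, ?_, ?_⟩
      · simp [List.splitOn, List.splitOnP_cons]
        simpa [List.splitOn] using hsp
      · rw [List.isChain_cons]
        simp only [List.isChain_nil, true_and, List.mem_cons, forall_eq_or_imp, ← hch]
        simp [ok_x_left]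
      · intro p
        simp [ok_x_right]
    · refine ⟨m :: B, Bs, ?_, ?_, ?_⟩
      · have : (m :: t).splitOn Ltr.x = (t.splitOn Ltr.x).modifyHead (List.cons m) := by
          simp [List.splitOn, List.splitOnP_cons, hm]
        rw [this, hsp, List.modifyHead_cons]
      · rw [List.isChain_cons, List.isChain_cons, hhd m, hch, and_assoc]
      · intro p
        simp

lemma st_ne_none (o : Option Ltr) : st o ≠ none := by
  rcases o with _ | l
  · simp [st]
  · cases l <;> simp [st]

lemma part1 (w : List Ltr) : w ∈ filtM.accepts ↔ ∀ b ∈ w.splitOn Ltr.x, Avoids b := by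
  obtain ⟨B, Bs, hsp, hch, -⟩ := splitOn_aux w
  rw [DFA.mem_accepts]
  have hacc : filtM.eval w ∈ filtM.accept ↔ filtM.eval w ≠ none := Iff.rfl
  rw [hacc, eval_eq]
  by_cases h : w.IsChain ok
  · simp only [if_pos h, ne_eq, st_ne_none, not_false_iff, true_iff]
    intro b hb
    rw [hsp] at hb
    rw [avoids_iff]
    rcases List.mem_cons.1 hb with rfl | hb
    · exact (hch.1 h).1
    · exact (hch.1 h).2 b hb
  · simp only [if_neg h, ne_eq, not_true, false_iff, not_forall]
    by_contra hall
    push_neg at hall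
    exact h (hch.2 ⟨by rw [← avoids_iff]; exact hall B (hsp ▸ List.mem_cons_self),
      fun b hb => by rw [← avoids_iff]; exact hall b (hsp ▸ List.mem_cons_of_mem _ hb)⟩)

-- Part 2 machinery
lemma disp_ca (k m : ℕ) :
    disp (List.replicate k Ltr.c ++ List.replicate m Ltr.a) = (k + m, k) := by
  simp [disp, List.map_replicate, List.sum_replicate, mv, Prod.ext_iff]

lemma disp_cb (k m : ℕ) :
    disp (List.replicate k Ltr.c ++ List.replicate m Ltr.b) = (k, k + m) := by
  simp [disp, List.map_replicate, List.sum_replicate, mv, Prod.ext_iff]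

lemma chain_cl (k m : ℕ) {l : Ltr} (h1 : ok Ltr.c l) (h2 : ok l l) :
    List.IsChain ok (List.replicate k Ltr.c ++ List.replicate m l) := by
  rw [List.isChain_append]
  refine ⟨List.isChain_replicate_of_rel _ (by decide), List.isChain_replicate_of_rel _ h2, ?_⟩
  intro p hp q hq
  cases k with
  | zero => simp at hp
  | succ k =>
    cases m with
    | zero => simp at hq
    | succ m =>
      simp [List.getLast?_replicate, List.head?_replicate] at hp hq
      · subst hp; subst hq; exact h1

lemma step_const {l h : Ltr} (hl : l = Ltr.a ∨ l = Ltr.b) (hok : ok l h)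
    (hx : h ≠ Ltr.x) : h = l := by
  rcases hl with rfl | rfl <;> cases h <;>
    first | rfl | exact absurd hok (by decide) | exact absurd rfl hx

lemma const_run {l : Ltr} (hl : l = Ltr.a ∨ l = Ltr.b) :
    ∀ t : List Ltr, List.IsChain ok (l :: t) → Ltr.x ∉ t →
      l :: t = List.replicate (t.length + 1) l := by
  intro t
  induction t with
  | nil => intro _ _; rfl
  | cons h t ih =>
    intro hch hx
    have h1 : ok l h := (List.isChain_cons_cons.1 hch).1
    have h2 := (List.isChain_cons_cons.1 hch).2
    have hne : h ≠ Ltr.x := fun e => hx (e ▸ List.mem_cons_self)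
    obtain rfl := step_const hl h1 hne
    have := ih h2 (fun e => hx (List.mem_cons_of_mem _ e))
    rw [List.replicate_succ]
    rw [this] at *
    simp [List.replicate_succ]

lemma struct : ∀ w : List Ltr, w.IsChain ok → Ltr.x ∉ w →
    ∃ k m : ℕ, w = List.replicate k Ltr.c ++ List.replicate m Ltr.a ∨
      w = List.replicate k Ltr.c ++ List.replicate m Ltr.b := by
  intro w
  induction w with
  | nil => intro _ _; exact ⟨0, 0, Or.inl rfl⟩
  | cons l t ih =>
    intro hch hx
    have hxt : Ltr.x ∉ t := fun e => hx (List.mem_cons_of_mem _ e)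
    cases l with
    | a => exact ⟨0, t.length + 1, Or.inl (by simpa using const_run (Or.inl rfl) t hch hxt)⟩
    | b => exact ⟨0, t.length + 1, Or.inr (by simpa using const_run (Or.inr rfl) t hch hxt)⟩
    | c =>
      obtain ⟨k, m, h | h⟩ := ih hch.tail hxt
      · exact ⟨k + 1, m, Or.inl (by rw [List.replicate_succ]; simp [h])⟩
      · exact ⟨k + 1, m, Or.inr (by rw [List.replicate_succ]; simp [h])⟩
    | x => exact absurd (List.mem_cons_self) (fun e => hx e)

lemma uniq {w1 w2 : List Ltr} (h1 : w1.IsChain ok) (hx1 : Ltr.x ∉ w1)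
    (h2 : w2.IsChain ok) (hx2 : Ltr.x ∉ w2) (hd : disp w1 = disp w2) : w1 = w2 := by
  obtain ⟨k, m, hw1⟩ := struct w1 h1 hx1
  obtain ⟨k', m', hw2⟩ := struct w2 h2 hx2
  rcases hw1 with rfl | rfl <;> rcases hw2 with rfl | rfl <;>
    simp only [disp_ca, disp_cb, Prod.mk.injEq] at hd
  · obtain ⟨e1, e2⟩ := hd
    obtain rfl : k = k' := e2
    obtain rfl : m = m' := by omega
    rfl
  · obtain ⟨e1, e2⟩ := hd
    obtain rfl : m = 0 := by omega
    obtain rfl : m' = 0 := by omega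
    obtain rfl : k = k' := by omega
    simp
  · obtain ⟨e1, e2⟩ := hd
    obtain rfl : m = 0 := by omega
    obtain rfl : m' = 0 := by omega
    obtain rfl : k = k' := by omega
    simp
  · obtain ⟨e1, e2⟩ := hd
    obtain rfl : k = k' := e1
    obtain rfl : m = m' := by omega
    rfl

lemma part2 (p q r s : ℕ) (hp : p ≤ r) (hq : q ≤ s) :
    ∃! w : List Ltr, Connects p q r s w ∧ Avoids w := by
  have key : ∀ y : List Ltr, Connects p q r s y ∧ Avoids y →
      disp y = (r - p, s - q) := by
    rintro y ⟨⟨-, e1, e2⟩, -⟩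
    have : (disp y).1 = r - p := by omega
    have : (disp y).2 = s - q := by omega
    ext <;> simp_all
  have alleq : ∀ y z : List Ltr, Connects p q r s y ∧ Avoids y →
      Connects p q r s z ∧ Avoids z → y = z := by
    intro y z hy hz
    exact uniq ((avoids_iff _).1 hy.2) hy.1.1 ((avoids_iff _).1 hz.2) hz.1.1
      (by rw [key y hy, key z hz])
  rcases le_total (s - q) (r - p) with h | h
  · refine ⟨List.replicate (s - q) Ltr.c ++ List.replicate ((r - p) - (s - q)) Ltr.a,
      ⟨⟨?_, ?_, ?_⟩, ?_⟩, fun y hy => alleq y _ hy ?_⟩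
    · simp [List.mem_append, List.mem_replicate]
    · rw [disp_ca]; simp; omega
    · rw [disp_ca]; simp; omega
    · exact (avoids_iff _).2 (chain_cl _ _ (by decide) (by decide))
    · refine ⟨⟨?_, ?_, ?_⟩, ?_⟩
      · simp [List.mem_append, List.mem_replicate]
      · rw [disp_ca]; simp; omega
      · rw [disp_ca]; simp; omega
      · exact (avoids_iff _).2 (chain_cl _ _ (by decide) (by decide))
  · refine ⟨List.replicate (r - p) Ltr.c ++ List.replicate ((s - q) - (r - p)) Ltr.b,
      ⟨⟨?_, ?_, ?_⟩, ?_⟩, fun y hy => alleq y _ hy ?_⟩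
    · simp [List.mem_append, List.mem_replicate]
    · rw [disp_cb]; simp; omega
    · rw [disp_cb]; simp; omega
    · exact (avoids_iff _).2 (chain_cl _ _ (by decide) (by decide))
    · refine ⟨⟨?_, ?_, ?_⟩, ?_⟩
      · simp [List.mem_append, List.mem_replicate]
      · rw [disp_cb]; simp; omega
      · rw [disp_cb]; simp; omega
      · exact (avoids_iff _).2 (chain_cl _ _ (by decide) (by decide))


/-- A word over {a,b,c,x} is accepted by the filter M iff every block between
consecutive occurrences of x (and before the first and after the last x)
avoids the factors ab, ba, ac, bc; consequently M allows a unique ε-path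
between any two composition states connected in the grid. -/
theorem filter_blockwise_and_unique_path :
    (∀ w : List Ltr, w ∈ filtM.accepts ↔
      ∀ b ∈ w.splitOn Ltr.x, Avoids b) ∧
    (∀ p q r s : ℕ, p ≤ r → q ≤ s →
      ∃! w : List Ltr, Connects p q r s w ∧ Avoids w) := by
  exact ⟨part1, part2⟩
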